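/- Let σ(x) = 1/(1 + e^{−x}) be the logistic sigmoid and let q ≥ 0. Then the second moment of σ under the centered Gaussian distribution of variance q satisfies ∫_ℝ σ(x)² dN(0,q)(x) ≥ 1/4. (This is the key step of the paper's Lemma B.1, which gives the lower bound Θ_∞^{(L)}(x,x) ≥ 1/4 on the diagonal of the NTK of a sigmoid network.) -/

import Mathlib

open MeasureTheory ProbabilityTheory

lemma sigmoid_cont : Continuous fun x : ℝ => (1 / (1 + Real.exp (-x))) ^ 2 := by
  have h : ∀ x : ℝ, 1 + Real.exp (-x) ≠ 0 := fun x =>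
    ne_of_gt (by positivity)
  exact ((continuous_const.div (continuous_const.add
    (Real.continuous_exp.comp continuous_neg)) h).pow 2)

/-- key step of the paper's Lemma B.1: the second moment of the logistic
sigmoid `σ(x) = 1/(1 + e^{−x})` under a centered Gaussian of variance `q ≥ 0` is at
least `1/4`. -/
theorem sigmoid_sq_gaussian_moment_ge (q : NNReal) :
    (1 / 4 : ℝ) ≤ ∫ x, (1 / (1 + Real.exp (-x))) ^ 2 ∂(gaussianReal 0 q) := by
  set μ := gaussianReal 0 q with hμ
  set f : ℝ → ℝ := fun x => (1 / (1 + Real.exp (-x))) ^ 2 with hf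
  have hfmeas : Continuous f := sigmoid_cont
  have hbound : ∀ x, ‖f x‖ ≤ 1 := by
    intro x
    have h1 : (0:ℝ) < 1 + Real.exp (-x) := by positivity
    have h2 : (1:ℝ) / (1 + Real.exp (-x)) ≤ 1 := by
      rw [div_le_one h1]
      linarith [Real.exp_pos (-x)]
    have h3 : (0:ℝ) ≤ 1 / (1 + Real.exp (-x)) := by positivity
    rw [Real.norm_eq_abs, abs_of_nonneg (by positivity)]
    calc (1 / (1 + Real.exp (-x))) ^ 2 ≤ 1 ^ 2 := by
          exact pow_le_pow_left₀ h3 h2 2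
      _ = 1 := one_pow 2
  have hint : ∀ (ν : Measure ℝ) [IsProbabilityMeasure ν], Integrable f ν := by
    intro ν _
    exact ⟨hfmeas.aestronglyMeasurable,
      HasFiniteIntegral.of_bounded (C := 1) (Filter.Eventually.of_forall hbound)⟩
  have hmap : μ.map (fun x => -x) = μ := by
    have := gaussianReal_map_const_mul (μ := 0) (v := q) (-1)
    simp only [neg_one_mul, mul_zero] at this
    rw [hμ, this]
    congr 1
    ext
    simp
  have hintf : Integrable f μ := hint μ
  have hintg : Integrable (fun x => f (-x)) μ := by
    refine ⟨((hfmeas.comp continuous_neg)).aestronglyMeasurable, ?_⟩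
    exact HasFiniteIntegral.of_bounded (C := 1)
      (Filter.Eventually.of_forall fun x => hbound (-x))
  have hneg : ∫ x, f (-x) ∂μ = ∫ x, f x ∂μ := by
    conv_rhs => rw [← hmap]
    rw [integral_map measurable_neg.aemeasurable hfmeas.aestronglyMeasurable]
  have hpt : ∀ x, (1/2 : ℝ) ≤ f x + f (-x) := by
    intro x
    have h1 : (0:ℝ) < 1 + Real.exp (-x) := by positivity
    have h2 : (0:ℝ) < 1 + Real.exp x := by positivity
    set a := 1 / (1 + Real.exp (-x)) with ha
    set b := 1 / (1 + Real.exp x) with hb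
    have hsum : a + b = 1 := by
      rw [ha, hb, div_add_div _ _ (ne_of_gt h1) (ne_of_gt h2),
        div_eq_one_iff_eq (by positivity)]
      have he : Real.exp (-x) * Real.exp x = 1 := by
        rw [← Real.exp_add]; simp
      ring_nf
      nlinarith [he]
    have hfx : f x = a ^ 2 := rfl
    have hfnx : f (-x) = b ^ 2 := by simp only [hf, neg_neg]; rfl
    rw [hfx, hfnx]
    nlinarith [sq_nonneg (a - b)]
  have h2 : (1/2 : ℝ) ≤ ∫ x, (f x + f (-x)) ∂μ := by
    have hconst : ∫ _x, (1/2 : ℝ) ∂μ = 1/2 := by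
      simp [hμ]
    calc (1/2 : ℝ) = ∫ _x, (1/2 : ℝ) ∂μ := hconst.symm
      _ ≤ ∫ x, (f x + f (-x)) ∂μ :=
          integral_mono (integrable_const _) (hintf.add hintg) hpt
  rw [integral_add hintf hintg, hneg] at h2
  show (1/4:ℝ) ≤ ∫ x, f x ∂μ
  linarith
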